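/- If (X₁,X₂) ~ BDsIW(θ₁,θ₂,θ₃,ζ) and x₁ < x₂ (both in ℕ), then P(X₁ = x₁, X₂ = x₂) = [(θ₁θ₃)^((x₁+1)^(−ζ)) − (θ₁θ₃)^(x₁^(−ζ))] · [θ₂^((x₂+1)^(−ζ)) − θ₂^(x₂^(−ζ))]. -/

import Mathlib

open MeasureTheory ProbabilityTheory Filter Real Set

/-- CDF of the discrete inverse Weibull distribution: `F(x;θ,ζ) = θ^((x+1)^(-ζ))`. -/
noncomputable def dsiwCDF (θ ζ : ℝ) (x : ℕ) : ℝ := θ ^ (((x : ℝ) + 1) ^ (-ζ))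

/-- `θ^(x^(-ζ))` with the convention `θ^(0^(-ζ)) = 0`. -/
noncomputable def dsiwC (θ ζ : ℝ) (x : ℕ) : ℝ := if x = 0 then 0 else θ ^ ((x : ℝ) ^ (-ζ))

/-- PMF of the discrete inverse Weibull distribution. -/
noncomputable def dsiwPMF (θ ζ : ℝ) (x : ℕ) : ℝ := dsiwCDF θ ζ x - dsiwC θ ζ x

lemma dsiwCDF_nonneg {θ : ℝ} (hθ : 0 < θ) (ζ : ℝ) (x : ℕ) : 0 ≤ dsiwCDF θ ζ x :=
  le_of_lt (Real.rpow_pos_of_pos hθ _)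

lemma dsiwC_le_dsiwCDF {θ ζ : ℝ} (hθ : θ ∈ Set.Ioo (0:ℝ) 1) (hζ : 0 < ζ) (x : ℕ) :
    dsiwC θ ζ x ≤ dsiwCDF θ ζ x := by
  unfold dsiwC dsiwCDF
  by_cases hx : x = 0
  · simp only [hx, if_pos]
    exact le_of_lt (Real.rpow_pos_of_pos hθ.1 _)
  · simp only [hx, if_false]
    have hx1 : (1:ℝ) ≤ (x:ℝ) := by exact_mod_cast Nat.one_le_iff_ne_zero.mpr hx
    have hexp : ((x:ℝ) + 1) ^ (-ζ) ≤ (x:ℝ) ^ (-ζ) := by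
      apply Real.rpow_le_rpow_of_nonpos (by linarith) (by linarith) (by linarith)
    exact Real.rpow_le_rpow_of_exponent_ge hθ.1 (le_of_lt hθ.2) hexp

lemma dsiwPMF_nonneg {θ ζ : ℝ} (hθ : θ ∈ Set.Ioo (0:ℝ) 1) (hζ : 0 < ζ) (x : ℕ) :
    0 ≤ dsiwPMF θ ζ x :=
  sub_nonneg.mpr (dsiwC_le_dsiwCDF hθ hζ x)

/-- If a `ℕ`-valued random variable has the DsIW CDF, its point masses are the DsIW PMF. -/
lemma meas_eq_pmf {Ω : Type*} [MeasurableSpace Ω] (μ : Measure Ω) [IsProbabilityMeasure μ]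
    (f : Ω → ℕ) (hf : Measurable f) {θ ζ : ℝ} (hθ : θ ∈ Set.Ioo (0:ℝ) 1) (hζ : 0 < ζ)
    (hc : ∀ k, μ {ω | f ω ≤ k} = ENNReal.ofReal (dsiwCDF θ ζ k)) (k : ℕ) :
    μ {ω | f ω = k} = ENNReal.ofReal (dsiwPMF θ ζ k) := by
  cases k with
  | zero =>
      have : {ω | f ω = 0} = {ω | f ω ≤ 0} := by ext ω; simp [Nat.le_zero]
      rw [this, hc 0]
      simp [dsiwPMF, dsiwC]
  | succ n =>
      have hset : {ω | f ω = n + 1} = {ω | f ω ≤ n + 1} \ {ω | f ω ≤ n} := by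
        ext ω; simp only [Set.mem_setOf_eq, Set.mem_diff]; omega
      have hsub : {ω | f ω ≤ n} ⊆ {ω | f ω ≤ n + 1} := fun ω h => le_trans h (Nat.le_succ n)
      have hm : NullMeasurableSet {ω | f ω ≤ n} μ :=
        (hf measurableSet_Iic : MeasurableSet (f ⁻¹' Set.Iic n)).nullMeasurableSet
      rw [hset, measure_diff hsub hm (measure_ne_top μ _), hc, hc,
        ← ENNReal.ofReal_sub _ (dsiwCDF_nonneg hθ.1 ζ n)]
      congr 1
      unfold dsiwPMF dsiwCDF dsiwC
      push_cast
      simp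

theorem bdsiw_pmf_lt {Ω : Type*} [MeasurableSpace Ω] (μ : Measure Ω)
    [IsProbabilityMeasure μ] (θ : Fin 3 → ℝ) (ζ : ℝ)
    (hθ : ∀ i, θ i ∈ Set.Ioo (0:ℝ) 1) (hζ : 0 < ζ)
    (W : Fin 3 → Ω → ℕ) (hW : ∀ i, Measurable (W i))
    (hindep : iIndepFun W μ)
    (hcdf : ∀ i x, μ {ω | W i ω ≤ x} = ENNReal.ofReal (dsiwCDF (θ i) ζ x))
    (x₁ x₂ : ℕ) (hx : x₁ < x₂) :
    (μ {ω | max (W 0 ω) (W 2 ω) = x₁ ∧ max (W 1 ω) (W 2 ω) = x₂}).toReal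
      = dsiwPMF (θ 0 * θ 2) ζ x₁ * dsiwPMF (θ 1) ζ x₂ := by
  have hθ02 : θ 0 * θ 2 ∈ Set.Ioo (0:ℝ) 1 :=
    ⟨mul_pos (hθ 0).1 (hθ 2).1,
      mul_lt_one_of_nonneg_of_lt_one_left (le_of_lt (hθ 0).1) (hθ 0).2 (le_of_lt (hθ 2).2) |>.trans_le le_rfl⟩
  -- rewrite the event
  have hE : {ω | max (W 0 ω) (W 2 ω) = x₁ ∧ max (W 1 ω) (W 2 ω) = x₂}
      = ((fun ω => (W 0 ω, W 2 ω)) ⁻¹' {p : ℕ × ℕ | max p.1 p.2 = x₁}) ∩ (W 1 ⁻¹' {x₂}) := by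
    ext ω
    simp only [Set.mem_setOf_eq, Set.mem_inter_iff, Set.mem_preimage, Set.mem_singleton_iff]
    omega
  -- independence of (W 0, W 2) and W 1
  have hAB := (hindep.indepFun_prodMk hW 0 2 1 (by decide) (by decide)).measure_inter_preimage_eq_mul
    {p : ℕ × ℕ | max p.1 p.2 = x₁} {x₂} ((Set.to_countable _).measurableSet)
    (measurableSet_singleton _)
  -- CDF of the max
  have hmaxcdf : ∀ k, μ {ω | max (W 0 ω) (W 2 ω) ≤ k}
      = ENNReal.ofReal (dsiwCDF (θ 0 * θ 2) ζ k) := by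
    intro k
    have hset : {ω | max (W 0 ω) (W 2 ω) ≤ k}
        = (W 0 ⁻¹' Set.Iic k) ∩ (W 2 ⁻¹' Set.Iic k) := by
      ext ω; simp [max_le_iff, Set.mem_Iic]
    have hind02 : IndepFun (W 0) (W 2) μ := hindep.indepFun (by decide)
    rw [hset, hind02.measure_inter_preimage_eq_mul _ _ measurableSet_Iic measurableSet_Iic]
    have h0 : W 0 ⁻¹' Set.Iic k = {ω | W 0 ω ≤ k} := rfl
    have h2 : W 2 ⁻¹' Set.Iic k = {ω | W 2 ω ≤ k} := rfl
    rw [h0, h2, hcdf 0 k, hcdf 2 k,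
      ← ENNReal.ofReal_mul (dsiwCDF_nonneg (hθ 0).1 ζ k)]
    congr 1
    unfold dsiwCDF
    exact (Real.mul_rpow (le_of_lt (hθ 0).1) (le_of_lt (hθ 2).1)).symm
  -- point masses
  have hA : μ ((fun ω => (W 0 ω, W 2 ω)) ⁻¹' {p : ℕ × ℕ | max p.1 p.2 = x₁})
      = ENNReal.ofReal (dsiwPMF (θ 0 * θ 2) ζ x₁) := by
    have : (fun ω => (W 0 ω, W 2 ω)) ⁻¹' {p : ℕ × ℕ | max p.1 p.2 = x₁}
        = {ω | (fun ω => max (W 0 ω) (W 2 ω)) ω = x₁} := rfl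
    rw [this]
    exact meas_eq_pmf μ _ ((hW 0).max (hW 2)) hθ02 hζ hmaxcdf x₁
  have hB : μ (W 1 ⁻¹' {x₂}) = ENNReal.ofReal (dsiwPMF (θ 1) ζ x₂) := by
    have : W 1 ⁻¹' {x₂} = {ω | W 1 ω = x₂} := rfl
    rw [this]
    exact meas_eq_pmf μ _ (hW 1) (hθ 1) hζ (hcdf 1) x₂
  rw [hE, hAB, hA, hB, ← ENNReal.ofReal_mul (dsiwPMF_nonneg hθ02 hζ x₁)]
  exact ENNReal.toReal_ofReal
    (mul_nonneg (dsiwPMF_nonneg hθ02 hζ x₁) (dsiwPMF_nonneg (hθ 1) hζ x₂))
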